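/- Let K be a field, E a finite-dimensional K-vector space, N ≥ 1 and r ≥ 1 integers, and R a subspace of E^⊗N. If R ⊗ E^⊗r = E^⊗r ⊗ R as subspaces of E^⊗(N+r) (under the canonical associativity identifications), then R = 0 or R = E^⊗N. -/
import Mathlib

open TensorProduct

variable (K : Type*) [Field K] (E : Type*) [AddCommGroup E] [Module K E]

/-- The subspace `R ⊗ E^⊗r` of `E^⊗(N+r)`: the image of the canonical map
`R ⊗ E^⊗r → E^⊗N ⊗ E^⊗r ≅ E^⊗(N+r)` induced by the inclusion of `R`. -/
noncomputable def subRight {N : ℕ} (R : Submodule K (⨂[K]^N E)) (r : ℕ) :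
    Submodule K (⨂[K]^(N + r) E) :=
  LinearMap.range ((TensorPower.mulEquiv (n := N) (m := r)).toLinearMap
    ∘ₗ LinearMap.rTensor (⨂[K]^r E) R.subtype)

/-- The subspace `E^⊗r ⊗ R` of `E^⊗(N+r)`: the image of the canonical map
`E^⊗r ⊗ R → E^⊗r ⊗ E^⊗N ≅ E^⊗(r+N) ≅ E^⊗(N+r)` induced by the inclusion of `R`. -/
noncomputable def subLeft {N : ℕ} (R : Submodule K (⨂[K]^N E)) (r : ℕ) :
    Submodule K (⨂[K]^(N + r) E) :=
  LinearMap.range ((TensorPower.cast K E (add_comm r N)).toLinearMap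
    ∘ₗ (TensorPower.mulEquiv (n := r) (m := N)).toLinearMap
    ∘ₗ LinearMap.lTensor (⨂[K]^r E) R.subtype)

/-! ### Auxiliary definitions and lemmas -/

/-- The bilinear "concatenation" map on tensor powers. -/
noncomputable def mulMap (n m : ℕ) :
    ⨂[K]^n E →ₗ[K] ⨂[K]^m E →ₗ[K] ⨂[K]^(n + m) E :=
  (TensorProduct.mk K _ _).compr₂ (TensorPower.mulEquiv (n := n) (m := m)).toLinearMap

lemma mulMap_apply {n m : ℕ} (x : ⨂[K]^n E) (y : ⨂[K]^m E) :
    mulMap K E n m x y = TensorPower.mulEquiv (x ⊗ₜ y) := rfl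

lemma mulMap_eq_gMul {n m : ℕ} (x : ⨂[K]^n E) (y : ⨂[K]^m E) :
    mulMap K E n m x y
      = @GradedMonoid.GMul.mul ℕ (fun i => ⨂[K]^i E) _ _ n m x y := rfl

lemma cast_mulMap {a a' b : ℕ} (h : a = a') (h2 : a + b = a' + b)
    (x : ⨂[K]^a E) (y : ⨂[K]^b E) :
    mulMap K E a' b (TensorPower.cast K E h x) y
      = TensorPower.cast K E h2 (mulMap K E a b x y) := by
  subst h; simp

lemma mulMap_cast {a b b' : ℕ} (h : b = b') (h2 : a + b = a + b')
    (x : ⨂[K]^a E) (y : ⨂[K]^b E) :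
    mulMap K E a b' x (TensorPower.cast K E h y)
      = TensorPower.cast K E h2 (mulMap K E a b x y) := by
  subst h; simp

lemma mulMap_assoc {a b c : ℕ} (x : ⨂[K]^a E) (y : ⨂[K]^b E) (z : ⨂[K]^c E) :
    TensorPower.cast K E (add_assoc a b c)
      (mulMap K E (a + b) c (mulMap K E a b x y) z)
      = mulMap K E a (b + c) x (mulMap K E b c y z) := by
  simp only [mulMap_eq_gMul]; exact TensorPower.mul_assoc x y z

lemma cast_comp {a b c : ℕ} (h : a = b) (h' : b = c) :
    (TensorPower.cast K E h').toLinearMap ∘ₗ (TensorPower.cast K E h).toLinearMap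
      = (TensorPower.cast K E (h.trans h')).toLinearMap := by
  subst h h'; ext x; simp

lemma range_right {n m : ℕ} (A : Submodule K (⨂[K]^n E)) :
    LinearMap.range ((TensorPower.mulEquiv (n := n) (m := m)).toLinearMap
      ∘ₗ LinearMap.rTensor (⨂[K]^m E) A.subtype)
      = Submodule.map₂ (mulMap K E n m) A ⊤ := by
  apply le_antisymm
  · rintro _ ⟨z, rfl⟩
    simp only [LinearMap.comp_apply]
    induction z using TensorProduct.induction_on with
    | zero => simp
    | tmul a b =>
        rw [LinearMap.rTensor_tmul]
        exact Submodule.apply_mem_map₂ _ a.2 Submodule.mem_top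
    | add x y hx hy => rw [map_add, map_add]; exact Submodule.add_mem _ hx hy
  · rw [Submodule.map₂_le]
    intro a ha b _
    exact ⟨⟨a, ha⟩ ⊗ₜ b, rfl⟩

lemma range_left {n m : ℕ} (B : Submodule K (⨂[K]^m E)) :
    LinearMap.range ((TensorPower.mulEquiv (n := n) (m := m)).toLinearMap
      ∘ₗ LinearMap.lTensor (⨂[K]^n E) B.subtype)
      = Submodule.map₂ (mulMap K E n m) ⊤ B := by
  apply le_antisymm
  · rintro _ ⟨z, rfl⟩
    simp only [LinearMap.comp_apply]
    induction z using TensorProduct.induction_on with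
    | zero => simp
    | tmul a b =>
        rw [LinearMap.lTensor_tmul]
        exact Submodule.apply_mem_map₂ _ Submodule.mem_top b.2
    | add x y hx hy => rw [map_add, map_add]; exact Submodule.add_mem _ hx hy
  · rw [Submodule.map₂_le]
    intro a _ b hb
    exact ⟨a ⊗ₜ ⟨b, hb⟩, rfl⟩

lemma map₂_top_top (n m : ℕ) :
    Submodule.map₂ (mulMap K E n m) ⊤ ⊤ = ⊤ := by
  rw [eq_top_iff]
  rintro x -
  obtain ⟨y, rfl⟩ := (TensorPower.mulEquiv (n := n) (m := m)).surjective x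
  induction y using TensorProduct.induction_on with
  | zero => simp
  | tmul a b => exact Submodule.apply_mem_map₂ _ Submodule.mem_top Submodule.mem_top
  | add x y hx hy => rw [map_add]; exact Submodule.add_mem _ hx hy

lemma map_cast_eq_iff {a b : ℕ} (h : a = b) (X : Submodule K (⨂[K]^a E))
    (Y : Submodule K (⨂[K]^b E)) :
    Submodule.map (TensorPower.cast K E h).toLinearMap X = Y
      ↔ X = Submodule.map (TensorPower.cast K E h.symm).toLinearMap Y := by
  subst h; simp

lemma map₂_cast_left {a a' b : ℕ} (h : a = a') (h2 : a + b = a' + b)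
    (A : Submodule K (⨂[K]^a E)) (B : Submodule K (⨂[K]^b E)) :
    Submodule.map₂ (mulMap K E a' b)
        (Submodule.map (TensorPower.cast K E h).toLinearMap A) B
      = Submodule.map (TensorPower.cast K E h2).toLinearMap
          (Submodule.map₂ (mulMap K E a b) A B) := by
  subst h; simp

lemma map₂_cast_right {a b b' : ℕ} (h : b = b') (h2 : a + b = a + b')
    (A : Submodule K (⨂[K]^a E)) (B : Submodule K (⨂[K]^b E)) :
    Submodule.map₂ (mulMap K E a b') A
        (Submodule.map (TensorPower.cast K E h).toLinearMap B)
      = Submodule.map (TensorPower.cast K E h2).toLinearMap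
          (Submodule.map₂ (mulMap K E a b) A B) := by
  subst h; simp

lemma map_map₂ {M N P Q : Type*} [AddCommGroup M] [AddCommGroup N] [AddCommGroup P]
    [AddCommGroup Q] [Module K M] [Module K N] [Module K P] [Module K Q]
    (f : M →ₗ[K] N →ₗ[K] P) (g : P →ₗ[K] Q) (A : Submodule K M) (B : Submodule K N) :
    Submodule.map g (Submodule.map₂ f A B) = Submodule.map₂ (f.compr₂ g) A B := by
  apply le_antisymm
  · rw [Submodule.map_le_iff_le_comap, Submodule.map₂_le]
    intro m hm n hn
    exact Submodule.apply_mem_map₂ _ hm hn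
  · rw [Submodule.map₂_le]
    intro m hm n hn
    exact Submodule.mem_map_of_mem (Submodule.apply_mem_map₂ _ hm hn)

lemma map₂_assoc {a b c : ℕ} (h : a + b + c = a + (b + c))
    (A : Submodule K (⨂[K]^a E)) (B : Submodule K (⨂[K]^b E))
    (C : Submodule K (⨂[K]^c E)) :
    Submodule.map (TensorPower.cast K E h).toLinearMap
      (Submodule.map₂ (mulMap K E (a + b) c) (Submodule.map₂ (mulMap K E a b) A B) C)
      = Submodule.map₂ (mulMap K E a (b + c)) A (Submodule.map₂ (mulMap K E b c) B C) := by
  rw [map_map₂]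
  conv_lhs => rw [← Submodule.span_eq A, ← Submodule.span_eq B, ← Submodule.span_eq C,
    Submodule.map₂_span_span, Submodule.map₂_span_span]
  conv_rhs => rw [← Submodule.span_eq A, ← Submodule.span_eq B, ← Submodule.span_eq C,
    Submodule.map₂_span_span, Submodule.map₂_span_span]
  congr 1
  apply Set.image2_assoc
  intro x y z
  simp only [LinearMap.compr₂_apply]
  exact mulMap_assoc K E x y z

lemma SP_step (N r m : ℕ) (R : Submodule K (⨂[K]^N E))
    (hbase : Submodule.map₂ (mulMap K E N r) R ⊤
      = Submodule.map (TensorPower.cast K E (add_comm r N)).toLinearMap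
          (Submodule.map₂ (mulMap K E r N) ⊤ R))
    (hm : Submodule.map₂ (mulMap K E N m) R ⊤
      = Submodule.map (TensorPower.cast K E (add_comm m N)).toLinearMap
          (Submodule.map₂ (mulMap K E m N) ⊤ R)) :
    Submodule.map₂ (mulMap K E N (m + r)) R ⊤
      = Submodule.map (TensorPower.cast K E (add_comm (m + r) N)).toLinearMap
          (Submodule.map₂ (mulMap K E (m + r) N) ⊤ R) := by
  have e1 : Submodule.map₂ (mulMap K E N (m + r)) R ⊤
      = Submodule.map₂ (mulMap K E N (m + r)) R (Submodule.map₂ (mulMap K E m r) ⊤ ⊤) := by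
    rw [map₂_top_top]
  rw [e1, ← map₂_assoc K E (add_assoc N m r) R ⊤ ⊤, hm,
    map₂_cast_left K E (add_comm m N) (by omega : m + N + r = N + m + r),
    (map_cast_eq_iff K E (add_assoc m N r) _ _).mp (map₂_assoc K E (add_assoc m N r) ⊤ R ⊤),
    hbase,
    map₂_cast_right K E (add_comm r N) (by omega : m + (r + N) = m + (N + r)),
    ← map₂_assoc K E (add_assoc m r N) ⊤ ⊤ R, map₂_top_top]
  simp only [← Submodule.map_comp, cast_comp]

/-- Contraction of the first `N` factors by a functional. -/
noncomputable def contrL (N m : ℕ) (f : Module.Dual K (⨂[K]^N E)) :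
    ⨂[K]^(N + m) E →ₗ[K] ⨂[K]^m E :=
  (TensorProduct.lid K _).toLinearMap ∘ₗ LinearMap.rTensor _ f
    ∘ₗ (TensorPower.mulEquiv (n := N) (m := m)).symm.toLinearMap

lemma contrL_mul {N m : ℕ} (f : Module.Dual K (⨂[K]^N E))
    (x : ⨂[K]^N E) (y : ⨂[K]^m E) :
    contrL K E N m f (mulMap K E N m x y) = f x • y := by
  simp [contrL, mulMap_apply]

lemma key_contr (N m s : ℕ) (hNs : N + s = m) (hsN : s + N = m)
    (f : Module.Dual K (⨂[K]^N E))
    (R : Submodule K (⨂[K]^N E)) :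
    Submodule.map (contrL K E N m f)
      (Submodule.map (TensorPower.cast K E (add_comm m N)).toLinearMap
        (Submodule.map₂ (mulMap K E m N) ⊤ R))
      ≤ Submodule.map (TensorPower.cast K E hsN).toLinearMap
          (Submodule.map₂ (mulMap K E s N) ⊤ R) := by
  rw [Submodule.map_le_iff_le_comap, Submodule.map_le_iff_le_comap, Submodule.map₂_le]
  intro u _ v hv
  simp only [Submodule.mem_comap, LinearEquiv.coe_coe]
  obtain ⟨z, rfl⟩ := ((TensorPower.mulEquiv (n := N) (m := s) (R := K) (M := E)).trans
    (TensorPower.cast K E hNs)).surjective u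
  induction z using TensorProduct.induction_on with
  | zero => simp
  | tmul p q =>
      have hu : ((TensorPower.mulEquiv (n := N) (m := s) (R := K) (M := E)).trans
          (TensorPower.cast K E hNs)) (p ⊗ₜ q)
          = TensorPower.cast K E hNs (mulMap K E N s p q) := rfl
      have hY : mulMap K E (N + s) N (mulMap K E N s p q) v
          = TensorPower.cast K E (add_assoc N s N).symm
              (mulMap K E N (s + N) p (mulMap K E s N q v)) := by
        rw [← mulMap_assoc K E p q v]; simp
      rw [hu, cast_mulMap K E hNs (by omega : N + s + N = m + N),
        TensorPower.cast_cast, hY, TensorPower.cast_cast,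
        ← mulMap_cast K E hsN (by omega : N + (s + N) = N + m) p,
        contrL_mul]
      exact Submodule.smul_mem _ _
        (Submodule.mem_map_of_mem (Submodule.apply_mem_map₂ _ Submodule.mem_top hv))
  | add x y hx hy =>
      rw [map_add, LinearMap.map_add₂, map_add, map_add]
      exact Submodule.add_mem _ (hx Submodule.mem_top) (hy Submodule.mem_top)

lemma tpFin [FiniteDimensional K E] (n : ℕ) : FiniteDimensional K (⨂[K]^n E) := by
  induction n with
  | zero => exact Module.Finite.equiv (TensorPower.algebraMap₀ (R := K) (M := E))
  | succ n ih =>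
      haveI := ih
      haveI : FiniteDimensional K (⨂[K]^1 E) :=
        Module.Finite.equiv (PiTensorProduct.subsingletonEquiv (0 : Fin 1) : _ ≃ₗ[K] E).symm
      exact Module.Finite.equiv (TensorPower.mulEquiv (n := n) (m := 1) (R := K) (M := E))

lemma tpRank [FiniteDimensional K E] (n : ℕ) :
    Module.finrank K (⨂[K]^n E) = (Module.finrank K E) ^ n := by
  induction n with
  | zero =>
      simpa using (TensorPower.algebraMap₀ (R := K) (M := E)).finrank_eq.symm
  | succ n ih =>
      haveI := tpFin K E n
      haveI : FiniteDimensional K (⨂[K]^1 E) :=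
        Module.Finite.equiv (PiTensorProduct.subsingletonEquiv (0 : Fin 1) : _ ≃ₗ[K] E).symm
      have e1 : Module.finrank K (⨂[K]^1 E) = Module.finrank K E :=
        (PiTensorProduct.subsingletonEquiv (0 : Fin 1) : _ ≃ₗ[K] E).finrank_eq
      have := (TensorPower.mulEquiv (n := n) (m := 1) (R := K) (M := E)).finrank_eq
      rw [← this, Module.finrank_tensorProduct, ih, e1, pow_succ]

/-- Let `K` be a field, `E` a finite-dimensional `K`-vector space,
`N ≥ 1` and `r ≥ 1` integers, and `R ⊆ E^⊗N` a subspace.  If `R ⊗ E^⊗r = E^⊗r ⊗ R` as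
subspaces of `E^⊗(N+r)`, then `R = 0` or `R = E^⊗N`. -/
theorem statement12 [FiniteDimensional K E] (N r : ℕ) (hN : 1 ≤ N) (hr : 1 ≤ r)
    (R : Submodule K (⨂[K]^N E))
    (h : subRight K E R r = subLeft K E R r) :
    R = ⊥ ∨ R = ⊤ := by
  classical
  by_cases hbot : R = ⊥
  · exact Or.inl hbot
  right
  -- instances
  haveI hFinN := tpFin K E N
  -- translate the hypothesis
  have hP : Submodule.map₂ (mulMap K E N r) R ⊤
      = Submodule.map (TensorPower.cast K E (add_comm r N)).toLinearMap
          (Submodule.map₂ (mulMap K E r N) ⊤ R) := by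
    have h' := h
    simp only [subRight, subLeft] at h'
    rw [range_right] at h'
    rw [LinearMap.range_comp, range_left] at h'
    exact h'
  -- iterate
  have hSk : ∀ k : ℕ, Submodule.map₂ (mulMap K E N (r + k * r)) R ⊤
      = Submodule.map (TensorPower.cast K E (add_comm (r + k * r) N)).toLinearMap
          (Submodule.map₂ (mulMap K E (r + k * r) N) ⊤ R) := by
    intro k
    induction k with
    | zero => rw [show r + 0 * r = r from by ring]; exact hP
    | succ n ih =>
        have h2 := SP_step K E N r (r + n * r) R hP ih
        have e : r + (n + 1) * r = r + n * r + r := by ring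
        rw [e]
        exact h2
  -- the exponent m
  set m := r + N * r with hmdef
  have hNr : N * 1 ≤ N * r := Nat.mul_le_mul_left N hr
  have hNm : N ≤ m := by omega
  set s := m - N with hsdef
  have hNs : N + s = m := by omega
  have hsN : s + N = m := by omega
  haveI := tpFin K E m
  haveI := tpFin K E s
  haveI := tpFin K E (s + N)
  -- a nonzero element of R and a dual functional
  obtain ⟨x, hxR, hx0⟩ := Submodule.ne_bot_iff R |>.mp hbot
  -- dimension of E is positive
  have hd : 0 < Module.finrank K E := by
    by_contra hd0
    have : Module.finrank K (⨂[K]^N E) = 0 := by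
      rw [tpRank]
      have : Module.finrank K E = 0 := by omega
      rw [this]
      exact zero_pow (by omega)
    haveI := Module.finrank_zero_iff (R := K) (M := ⨂[K]^N E) |>.mp this
    exact hx0 (Subsingleton.elim x 0)
  obtain ⟨f0, hf0⟩ : ∃ φ : Module.Dual K (⨂[K]^N E), φ x ≠ 0 := by
    by_contra hc
    push_neg at hc
    exact hx0 ((Module.forall_dual_apply_eq_zero_iff K x).mp hc)
  set f : Module.Dual K (⨂[K]^N E) := (f0 x)⁻¹ • f0 with hfdef
  have hfx : f x = 1 := by
    simp [hfdef, inv_mul_cancel₀ hf0]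
  -- contraction is surjective on R ⊗ E^m
  have htop : Submodule.map (contrL K E N m f) (Submodule.map₂ (mulMap K E N m) R ⊤) = ⊤ := by
    rw [eq_top_iff]
    rintro y -
    refine ⟨mulMap K E N m x y, Submodule.apply_mem_map₂ _ hxR Submodule.mem_top, ?_⟩
    rw [contrL_mul, hfx, one_smul]
  -- chain of inclusions
  have hchain : (⊤ : Submodule K (⨂[K]^m E))
      ≤ Submodule.map (TensorPower.cast K E hsN).toLinearMap
          (Submodule.map₂ (mulMap K E s N) ⊤ R) := by
    rw [← htop, hSk N]
    exact key_contr K E N m s hNs hsN f R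
  have heq : Submodule.map (TensorPower.cast K E hsN).toLinearMap
      (Submodule.map₂ (mulMap K E s N) ⊤ R) = ⊤ := top_le_iff.mp hchain
  -- dimension count
  have hrank1 : Module.finrank K (⨂[K]^m E)
      ≤ Module.finrank K ↥(Submodule.map₂ (mulMap K E s N) ⊤ R) := by
    calc Module.finrank K (⨂[K]^m E)
        = Module.finrank K ↥(Submodule.map (TensorPower.cast K E hsN).toLinearMap
            (Submodule.map₂ (mulMap K E s N) ⊤ R)) := by
              rw [heq]; exact (finrank_top K _).symm
      _ ≤ Module.finrank K ↥(Submodule.map₂ (mulMap K E s N) ⊤ R) :=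
          Submodule.finrank_map_le _ _
  have hrank2 : Module.finrank K ↥(Submodule.map₂ (mulMap K E s N) ⊤ R)
      ≤ (Module.finrank K E) ^ s * Module.finrank K R := by
    rw [← range_left]
    calc Module.finrank K ↥(LinearMap.range _)
        ≤ Module.finrank K ((⨂[K]^s E) ⊗[K] R) := LinearMap.finrank_range_le _
      _ = (Module.finrank K E) ^ s * Module.finrank K R := by
          simp [Module.finrank_tensorProduct, tpRank K E s]
  have hfin : (Module.finrank K E) ^ N ≤ Module.finrank K R := by
    have h1 : (Module.finrank K E) ^ s * (Module.finrank K E) ^ N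
        ≤ (Module.finrank K E) ^ s * Module.finrank K R := by
      calc (Module.finrank K E) ^ s * (Module.finrank K E) ^ N
          = (Module.finrank K E) ^ m := by rw [← pow_add, hsN]
        _ = Module.finrank K (⨂[K]^m E) := (tpRank K E m).symm
        _ ≤ (Module.finrank K E) ^ s * Module.finrank K R := le_trans hrank1 hrank2
    exact Nat.le_of_mul_le_mul_left h1 (pow_pos hd s)
  have : Module.finrank K R = Module.finrank K (⨂[K]^N E) := by
    have h2 : Module.finrank K R ≤ (Module.finrank K E) ^ N := by
      rw [← tpRank K E N]
      exact Submodule.finrank_le R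
    rw [tpRank]
    omega
  exact Submodule.eq_top_of_finrank_eq (by rw [this])
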